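/- Let B be a unital complex Banach algebra and let 𝔅 be an open subgroup of the invertible group B⁻¹. Then for every b ∈ 𝔅 and every u ∈ rad(B), the element u + b belongs to 𝔅. In particular, u + 𝔅 = 𝔅 for every u ∈ rad(B). -/

import Mathlib

/-- In a (possibly noncommutative) ring, `1 + u` is a unit for every `u` in
the Jacobson radical of the zero ideal. -/
lemma isUnit_one_add_of_mem_jacobson_bot' {R : Type*} [Ring R] {u : R}
    (hu : u ∈ Ideal.jacobson (⊥ : Ideal R)) : IsUnit (1 + u) := by
  have key : ∀ x : R, x ∈ Ideal.jacobson (⊥ : Ideal R) → ∃ z : R, z * (1 + x) = 1 := by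
    intro x hx
    obtain ⟨z, hz⟩ := Ideal.mem_jacobson_iff.1 hx 1
    rw [Ideal.mem_bot] at hz
    refine ⟨z, ?_⟩
    have : z * (1 + x) = z * 1 * x + z := by noncomm_ring
    rw [this, ← sub_eq_zero]
    simpa using hz
  obtain ⟨z, hz⟩ := key u hu
  have hz' : z = 1 + -(z * u) := by
    have : z * (1 + u) = z + z * u := by noncomm_ring
    rw [this] at hz
    linear_combination (norm := noncomm_ring) hz
  have hmem : -(z * u) ∈ Ideal.jacobson (⊥ : Ideal R) :=
    neg_mem (Ideal.mul_mem_left _ z hu)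
  obtain ⟨w, hw⟩ := key _ hmem
  rw [← hz'] at hw
  have hweq : w = 1 + u := by
    calc w = w * (z * (1 + u)) := by rw [hz, mul_one]
    _ = (w * z) * (1 + u) := by rw [mul_assoc]
    _ = 1 + u := by rw [hw, one_mul]
  refine ⟨⟨1 + u, z, ?_, hz⟩, rfl⟩
  rw [← hweq, hw]

/-- An open subgroup `𝔅` of the invertible group of a unital complex Banach
algebra `B` is invariant under translation by elements of the Jacobson
radical: `u + b ∈ 𝔅` for every `b ∈ 𝔅` and `u ∈ rad B`; in particular
`u + 𝔅 = 𝔅`. -/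
theorem radical_translation_invariant_of_open_subgroup
    {B : Type*} [NormedRing B] [NormedAlgebra ℂ B] [CompleteSpace B]
    (𝔅 : Set B)
    (h𝔅unit : ∀ b ∈ 𝔅, IsUnit b) (h𝔅one : (1 : B) ∈ 𝔅)
    (h𝔅mul : ∀ a ∈ 𝔅, ∀ b ∈ 𝔅, a * b ∈ 𝔅)
    (h𝔅inv : ∀ b ∈ 𝔅, Ring.inverse b ∈ 𝔅) (h𝔅open : IsOpen 𝔅) :
    (∀ b ∈ 𝔅, ∀ u ∈ Ideal.jacobson (⊥ : Ideal B), u + b ∈ 𝔅) ∧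
    (∀ u ∈ Ideal.jacobson (⊥ : Ideal B), (fun b => u + b) '' 𝔅 = 𝔅) := by
  have main : ∀ b ∈ 𝔅, ∀ u ∈ Ideal.jacobson (⊥ : Ideal B), u + b ∈ 𝔅 := by
    intro b hb u hu
    have hbu : IsUnit b := h𝔅unit b hb
    -- v = u * b⁻¹ is in the radical (the radical of ⊥ is two-sided)
    set v : B := u * Ring.inverse b with hv
    have hvmem : v ∈ Ideal.jacobson (⊥ : Ideal B) :=
      Ideal.mul_mem_right _ _ hu
    -- each 1 + z • v is a unit
    have hunit : ∀ z : ℂ, IsUnit (1 + z • v) := by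
      intro z
      apply isUnit_one_add_of_mem_jacobson_bot'
      rw [Algebra.smul_def]
      exact Ideal.mul_mem_left _ _ hvmem
    -- the clopen set of parameters
    set f : ℂ → B := fun z => 1 + z • v with hf
    have hfc : Continuous f := by continuity
    set S : Set ℂ := f ⁻¹' 𝔅 with hS
    have hSopen : IsOpen S := h𝔅open.preimage hfc
    have hSclosed : IsClosed S := by
      rw [← isOpen_compl_iff, isOpen_iff_mem_nhds]
      intro t₀ ht₀
      have hinv : ContinuousAt Ring.inverse (f t₀) := by
        have := NormedRing.inverse_continuousAt (hunit t₀).unit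
        rwa [IsUnit.unit_spec] at this
      have hg : ContinuousAt (fun z => f t₀ * Ring.inverse (f z)) t₀ :=
        continuousAt_const.mul (hinv.comp hfc.continuousAt)
      have hnb : (fun z => f t₀ * Ring.inverse (f z)) ⁻¹' 𝔅 ∈ nhds t₀ :=
        hg.preimage_mem_nhds (h𝔅open.mem_nhds (by
          show f t₀ * Ring.inverse (f t₀) ∈ 𝔅
          rw [Ring.mul_inverse_cancel _ (hunit t₀)]
          exact h𝔅one))
      filter_upwards [hnb] with z hz
      intro hzS
      apply ht₀
      have : f t₀ = (f t₀ * Ring.inverse (f z)) * f z := by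
        rw [mul_assoc, Ring.inverse_mul_cancel _ (hunit z), mul_one]
      rw [Set.mem_preimage, this]
      exact h𝔅mul _ hz _ hzS
    have hSuniv : S = Set.univ := by
      rcases isClopen_iff.mp ⟨hSclosed, hSopen⟩ with h | h
      · exfalso
        have : (0 : ℂ) ∈ S := by
          simp only [hS, Set.mem_preimage, hf]
          simpa using h𝔅one
        rw [h] at this; exact this
      · exact h
    have h1 : (1 : ℂ) ∈ S := hSuniv ▸ Set.mem_univ _
    have hfb : f 1 * b ∈ 𝔅 := h𝔅mul _ h1 _ hb
    have heq : f 1 * b = u + b := by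
      simp only [hf, one_smul, hv]
      rw [add_mul, one_mul, mul_assoc, Ring.inverse_mul_cancel _ hbu, mul_one, add_comm]
    rwa [heq] at hfb
  refine ⟨main, fun u hu => ?_⟩
  ext x
  constructor
  · rintro ⟨b, hb, rfl⟩
    exact main b hb u hu
  · intro hx
    refine ⟨-u + x, main x hx (-u) (neg_mem hu), by simp⟩
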